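/- Let λ, γ, C₁ > 0 and 0 < C_φ < R < 2 C_φ. Define C₂ = ( (R − C_φ) / (C₁ R^{1+γ/2}) )^{2/γ} and C̄ = C₂ (2 C_φ − R) > 0. Let 0 < ε < C₂ and let φ : [0,∞) → [0,∞) be continuous with φ(0) = C_φ ε, and suppose that for every t ≥ 0 with the property that φ(s) ≤ ε R e^{λ s} for all s ∈ [0,t], one has |φ(t) − C_φ ε e^{λ t}| ≤ C₁ (ε R e^{λ t})^{1+γ/2}. Then, setting T_ε = (1/λ) log(C₂/ε) > 0, one has φ(s) ≤ ε R e^{λ s} for all s ∈ [0, T_ε] and φ(T_ε) ≥ C̄. -/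

import Mathlib

open Real

/-- Abstract bootstrap lemma: let `λ, γ, C₁ > 0`, `0 < C_φ < R < 2C_φ`,
`C₂ = ((R − C_φ)/(C₁ R^{1+γ/2}))^{2/γ}`, `C̄ = C₂(2C_φ − R) > 0`, and `0 < ε < C₂`.
If `φ : [0,∞) → [0,∞)` is continuous with `φ(0) = C_φ ε` and satisfies the Duhamel-type
bound `|φ(t) − C_φ ε e^{λt}| ≤ C₁ (εR e^{λt})^{1+γ/2}` at every `t ≥ 0` up to which
`φ(s) ≤ εR e^{λs}` holds, then with `T_ε = (1/λ) log(C₂/ε) > 0` one has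
`φ(s) ≤ εR e^{λs}` on `[0,T_ε]` and `φ(T_ε) ≥ C̄`. -/
theorem bootstrap_instability (lam gam C₁ Cphi R : ℝ)
    (hlam : 0 < lam) (hgam : 0 < gam) (hC₁ : 0 < C₁)
    (hCphi : 0 < Cphi) (hR₁ : Cphi < R) (hR₂ : R < 2 * Cphi)
    (C₂ : ℝ) (hC₂ : C₂ = ((R - Cphi) / (C₁ * R ^ (1 + gam/2))) ^ (2/gam))
    (Cbar : ℝ) (hCbar : Cbar = C₂ * (2 * Cphi - R))
    (ε : ℝ) (hε : 0 < ε) (hεC₂ : ε < C₂)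
    (φ : ℝ → ℝ) (hφcont : ContinuousOn φ (Set.Ici 0))
    (hφnonneg : ∀ t : ℝ, 0 ≤ t → 0 ≤ φ t)
    (hφ0 : φ 0 = Cphi * ε)
    (hduhamel : ∀ t : ℝ, 0 ≤ t →
      (∀ s ∈ Set.Icc (0:ℝ) t, φ s ≤ ε * R * Real.exp (lam * s)) →
      |φ t - Cphi * ε * Real.exp (lam * t)| ≤ C₁ * (ε * R * Real.exp (lam * t)) ^ (1 + gam/2))
    (Tε : ℝ) (hTε : Tε = (1/lam) * Real.log (C₂ / ε)) :
    0 < Tε ∧ 0 < Cbar ∧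
      (∀ s ∈ Set.Icc (0:ℝ) Tε, φ s ≤ ε * R * Real.exp (lam * s)) ∧
      Cbar ≤ φ Tε := by
  have hRpos : 0 < R := hCphi.trans hR₁
  have hRexp : 0 < R ^ (1 + gam/2) := Real.rpow_pos_of_pos hRpos _
  have hXpos : 0 < (R - Cphi) / (C₁ * R ^ (1 + gam/2)) :=
    div_pos (by linarith) (mul_pos hC₁ hRexp)
  have hC₂pos : 0 < C₂ := hC₂ ▸ Real.rpow_pos_of_pos hXpos _
  have hmulone : (2/gam) * (gam/2) = 1 := by field_simp
  have hC₂pow : C₂ ^ (gam/2) = (R - Cphi) / (C₁ * R ^ (1 + gam/2)) := by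
    rw [hC₂, ← Real.rpow_mul hXpos.le, hmulone, Real.rpow_one]
  have h3 : C₁ * R ^ (1 + gam/2) * C₂ ^ (gam/2) = R - Cphi := by
    rw [hC₂pow]; field_simp
  -- key algebraic inequality
  have hkey : ∀ u : ℝ, 0 < u → u ≤ C₂ →
      C₁ * (u * R) ^ (1 + gam/2) ≤ (R - Cphi) * u := by
    intro u hu huC
    have h1 : (u * R) ^ (1 + gam/2) = u * (u ^ (gam/2) * R ^ (1 + gam/2)) := by
      rw [Real.mul_rpow hu.le hRpos.le, Real.rpow_add hu, Real.rpow_one]; ring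
    rw [h1]
    have h2 : u ^ (gam/2) ≤ C₂ ^ (gam/2) :=
      Real.rpow_le_rpow hu.le huC (by positivity)
    calc C₁ * (u * (u ^ (gam/2) * R ^ (1 + gam/2)))
        = (C₁ * R ^ (1 + gam/2) * u ^ (gam/2)) * u := by ring
      _ ≤ (C₁ * R ^ (1 + gam/2) * C₂ ^ (gam/2)) * u := by
          apply mul_le_mul_of_nonneg_right _ hu.le
          exact mul_le_mul_of_nonneg_left h2 (by positivity)
      _ = (R - Cphi) * u := by rw [h3]
  have hkeylt : ∀ u : ℝ, 0 < u → u < C₂ →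
      C₁ * (u * R) ^ (1 + gam/2) < (R - Cphi) * u := by
    intro u hu huC
    have h1 : (u * R) ^ (1 + gam/2) = u * (u ^ (gam/2) * R ^ (1 + gam/2)) := by
      rw [Real.mul_rpow hu.le hRpos.le, Real.rpow_add hu, Real.rpow_one]; ring
    rw [h1]
    have h2 : u ^ (gam/2) < C₂ ^ (gam/2) :=
      Real.rpow_lt_rpow hu.le huC (by positivity)
    calc C₁ * (u * (u ^ (gam/2) * R ^ (1 + gam/2)))
        = (C₁ * R ^ (1 + gam/2) * u ^ (gam/2)) * u := by ring
      _ < (C₁ * R ^ (1 + gam/2) * C₂ ^ (gam/2)) * u := by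
          apply mul_lt_mul_of_pos_right _ hu
          exact mul_lt_mul_of_pos_left h2 (by positivity)
      _ = (R - Cphi) * u := by rw [h3]
  have hTεpos : 0 < Tε := by
    rw [hTε]
    exact mul_pos (by positivity) (Real.log_pos ((one_lt_div hε).2 hεC₂))
  have hexpTε : Real.exp (lam * Tε) = C₂ / ε := by
    rw [hTε]
    have h : lam * (1/lam * Real.log (C₂/ε)) = Real.log (C₂/ε) := by field_simp
    rw [h, Real.exp_log (div_pos hC₂pos hε)]
  have hεexpTε : ε * Real.exp (lam * Tε) = C₂ := by
    rw [hexpTε]; field_simp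
  have hεexpLT : ∀ t : ℝ, t < Tε → ε * Real.exp (lam * t) < C₂ := by
    intro t ht
    have h1 : Real.exp (lam * t) < Real.exp (lam * Tε) :=
      Real.exp_lt_exp.2 (mul_lt_mul_of_pos_left ht hlam)
    have h2 : ε * Real.exp (lam * t) < ε * Real.exp (lam * Tε) :=
      mul_lt_mul_of_pos_left h1 hε
    linarith [hεexpTε]
  have hεepos : ∀ t : ℝ, 0 < ε * Real.exp (lam * t) := fun t => by positivity
  have hE0 : Cphi * ε ≤ ε * R * Real.exp (lam * 0) := by
    rw [mul_zero, Real.exp_zero]; nlinarith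
  -- upper improvement (strict for t < Tε)
  have hup : ∀ t : ℝ, 0 ≤ t → t < Tε →
      (∀ s ∈ Set.Icc (0:ℝ) t, φ s ≤ ε * R * Real.exp (lam * s)) →
      φ t < ε * R * Real.exp (lam * t) := by
    intro t ht htT hb
    have hd := hduhamel t ht hb
    rw [show ε * R * Real.exp (lam * t) = (ε * Real.exp (lam * t)) * R by ring,
        show Cphi * ε * Real.exp (lam * t) = Cphi * (ε * Real.exp (lam * t)) by ring] at hd
    have hk := hkeylt _ (hεepos t) (hεexpLT t htT)
    have h1 := (abs_sub_le_iff.1 hd).1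
    have : φ t < (ε * Real.exp (lam * t)) * R := by nlinarith
    linarith [this, show (ε * Real.exp (lam * t)) * R = ε * R * Real.exp (lam * t) from by ring]
  have hEcont : Continuous fun x : ℝ => ε * R * Real.exp (lam * x) := by fun_prop
  -- the bootstrap set
  set A : Set ℝ := {t | t ∈ Set.Icc 0 Tε ∧
    ∀ s ∈ Set.Icc (0:ℝ) t, φ s ≤ ε * R * Real.exp (lam * s)} with hA
  have h0A : 0 ∈ A := by
    refine ⟨⟨le_refl 0, hTεpos.le⟩, ?_⟩
    intro s hs
    have hs0 : s = 0 := le_antisymm hs.2 hs.1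
    rw [hs0, hφ0]; exact hE0
  have hne : A.Nonempty := ⟨0, h0A⟩
  have hbdd : BddAbove A := ⟨Tε, fun t ht => ht.1.2⟩
  set T := sSup A with hTdef
  have hT0 : 0 ≤ T := le_csSup hbdd h0A
  have hTle : T ≤ Tε := csSup_le hne fun t ht => ht.1.2
  have hbelow : ∀ s : ℝ, 0 ≤ s → s < T → φ s ≤ ε * R * Real.exp (lam * s) := by
    intro s hs0 hsT
    obtain ⟨t, htA, hst⟩ := exists_lt_of_lt_csSup hne hsT
    exact htA.2 s ⟨hs0, hst.le⟩
  have hTclosed : φ T ≤ ε * R * Real.exp (lam * T) := by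
    rcases eq_or_lt_of_le hT0 with h0 | h0
    · rw [← h0, hφ0]; exact hE0
    · have hφT : Filter.Tendsto φ (nhdsWithin T (Set.Ico 0 T)) (nhds (φ T)) :=
        (hφcont T hT0).mono fun x hx => hx.1
      have hET : Filter.Tendsto (fun x => ε * R * Real.exp (lam * x))
          (nhdsWithin T (Set.Ico 0 T)) (nhds (ε * R * Real.exp (lam * T))) :=
        (hEcont.tendsto T).mono_left nhdsWithin_le_nhds
      have : (nhdsWithin T (Set.Ico 0 T)).NeBot := right_nhdsWithin_Ico_neBot h0
      refine le_of_tendsto_of_tendsto hφT hET ?_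
      filter_upwards [self_mem_nhdsWithin] with x hx
      exact hbelow x hx.1 hx.2
  have hTbound : ∀ s ∈ Set.Icc (0:ℝ) T, φ s ≤ ε * R * Real.exp (lam * s) := by
    intro s hs
    rcases lt_or_eq_of_le hs.2 with h | h
    · exact hbelow s hs.1 h
    · rw [h]; exact hTclosed
  have hTeq : T = Tε := by
    by_contra hne'
    have hTlt : T < Tε := lt_of_le_of_ne hTle hne'
    have hstrict : φ T < ε * R * Real.exp (lam * T) := hup T hT0 hTlt hTbound
    have hc : ContinuousWithinAt (fun x => ε * R * Real.exp (lam * x) - φ x)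
        (Set.Ici 0) T :=
      (hEcont.continuousWithinAt).sub (hφcont T hT0)
    have hpos : (0:ℝ) < ε * R * Real.exp (lam * T) - φ T := by linarith
    have hev : ∀ᶠ x in nhdsWithin T (Set.Ici 0),
        0 < ε * R * Real.exp (lam * x) - φ x :=
      hc.eventually (eventually_gt_nhds hpos)
    rw [Filter.eventually_iff, mem_nhdsWithin] at hev
    obtain ⟨U, hUopen, hTU, hUsub⟩ := hev
    obtain ⟨δ, hδ, hball⟩ := Metric.isOpen_iff.1 hUopen T hTU
    set t' := min (T + δ/2) Tε with ht'
    have hTt' : T < t' := lt_min (by linarith) hTlt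
    have ht'A : t' ∈ A := by
      refine ⟨⟨by linarith, min_le_right _ _⟩, ?_⟩
      intro s hs
      rcases le_or_gt s T with h | h
      · exact hTbound s ⟨hs.1, h⟩
      · have hsU : s ∈ U := by
          apply hball
          rw [Metric.mem_ball, Real.dist_eq, abs_of_nonneg (by linarith)]
          have : s ≤ T + δ/2 := le_trans hs.2 (min_le_left _ _)
          linarith
        have h2 := hUsub ⟨hsU, hs.1⟩
        simp only [Set.mem_setOf_eq] at h2
        linarith
    have : t' ≤ T := le_csSup hbdd ht'A
    linarith
  have hboundTε : ∀ s ∈ Set.Icc (0:ℝ) Tε, φ s ≤ ε * R * Real.exp (lam * s) := by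
    rw [← hTeq]; exact hTbound
  -- lower bound at Tε
  have hd := hduhamel Tε hTεpos.le hboundTε
  rw [show ε * R * Real.exp (lam * Tε) = (ε * Real.exp (lam * Tε)) * R by ring,
      show Cphi * ε * Real.exp (lam * Tε) = Cphi * (ε * Real.exp (lam * Tε)) by ring,
      hεexpTε] at hd
  have hk2 := hkey C₂ hC₂pos le_rfl
  have h2 := (abs_sub_le_iff.1 hd).2
  have hCbar' : Cbar = Cphi * C₂ - (R - Cphi) * C₂ := by rw [hCbar]; ring
  refine ⟨hTεpos, ?_, hboundTε, by linarith⟩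
  rw [hCbar]; nlinarith
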